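/- Let R and S be rings, and let M be an (R,S)-bimodule that has finite uniform (Goldie) rank as a left R-module and is torsionfree as a right S-module over a semiprime right Goldie ring S. Let N be a left R-module and f : M → N an R-module homomorphism whose kernel is not essential in M. Then Hom_R(M,N), as a left S-module, is not torsion; i.e., there is no regular element c of S with c·f = 0. -/

import Mathlib

/-! STATEMENT 10.  Right `S`-modules are modules over `Sᵐᵒᵖ`. -/

section Defs

variable (S : Type) [Ring S]

/-- A regular element of a ring: a two-sided non-zero-divisor. -/
def IsRegElem (c : S) : Prop := (∀ x : S, x * c = 0 → x = 0) ∧ (∀ x : S, c * x = 0 → x = 0)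

/-- A ring is semiprime if it has no nonzero nilpotent (two-sided) ideals; elementwise:
`a S a = 0` implies `a = 0`. -/
def IsSemiprimeRing : Prop := ∀ a : S, (∀ s : S, a * s * a = 0) → a = 0

/-- The right annihilator of a subset of `S`. -/
def rightAnn (X : Set S) : Set S := { s | ∀ x ∈ X, x * s = 0 }

/-- `S` satisfies the ascending chain condition on right annihilators. -/
def ACCRightAnn : Prop :=
  ∀ f : ℕ → Set S, (∀ n, ∃ X, f n = rightAnn S X) → (∀ n, f n ⊆ f (n + 1)) →
    ∃ N, ∀ m, N ≤ m → f m = f N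

end Defs

section ModDefs

variable (R : Type) [Ring R] (M : Type) [AddCommGroup M] [Module R M]

/-- A submodule is essential if it meets every nonzero submodule nontrivially. -/
def IsEssentialSub (K : Submodule R M) : Prop :=
  ∀ L : Submodule R M, L ≠ ⊥ → K ⊓ L ≠ ⊥

/-- `M` has uniform (Goldie) rank at most `n`: there is no independent family of `n + 1`
nonzero submodules. -/
def UniformRankLE (n : ℕ) : Prop :=
  ∀ g : Fin (n + 1) → Submodule R M, (∀ i, g i ≠ ⊥) → ¬ iSupIndep g

/-- `M` has finite uniform (Goldie) rank. -/
def FiniteUniformRank : Prop := ∃ n, UniformRankLE R M n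

end ModDefs

/-- A right `S`-module `M` is torsionfree if no nonzero element is killed by a regular
element of `S`. -/
def RightTorsionfree (S : Type) [Ring S] (M : Type) [AddCommGroup M] [Module Sᵐᵒᵖ M] : Prop :=
  ∀ (m : M) (c : S), IsRegElem S c → MulOpposite.op c • m = 0 → m = 0

/-- A right Goldie ring: finite uniform rank as a right module over itself, and the
ascending chain condition on right annihilators. -/
def IsRightGoldie (S : Type) [Ring S] : Prop :=
  FiniteUniformRank Sᵐᵒᵖ S ∧ ACCRightAnn S


private lemma key_sum {R M : Type} [Ring R] [AddCommGroup M] [Module R M]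
    (phi : Module.End R M) (hphi : Function.Injective phi)
    (L : Submodule R M) (hdisj : ∀ x, x ∈ L → x ∈ LinearMap.range phi → x = 0) :
    ∀ (k : ℕ) (z : ℕ → M), (∀ i, z i ∈ Submodule.map (phi ^ i) L) →
      (∑ i ∈ Finset.range (k + 1), z i) = 0 → ∀ i ≤ k, z i = 0 := by
  intro k
  induction k with
  | zero =>
    intro z hz hsum i hi
    interval_cases i
    simpa using hsum
  | succ k ih =>
    intro z hz hsum
    have hrange : ∀ i, z (i + 1) ∈ Submodule.map phi (Submodule.map (phi ^ i) L) := by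
      intro i
      have h := hz (i + 1)
      rwa [pow_succ', Module.End.mul_eq_comp, Submodule.map_comp] at h
    have hsplit : (∑ i ∈ Finset.range (k + 1), z (i + 1)) + z 0 = 0 := by
      rw [← Finset.sum_range_succ' z (k + 1)]; exact hsum
    have hz0 : z 0 = 0 := by
      refine hdisj _ (by simpa using hz 0) ?_
      have h1 : z 0 = -(∑ i ∈ Finset.range (k + 1), z (i + 1)) :=
        eq_neg_of_add_eq_zero_right hsplit
      rw [h1]
      refine neg_mem (Submodule.sum_mem _ fun i _ => ?_)
      obtain ⟨y, -, hy⟩ := Submodule.mem_map.mp (hrange i)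
      exact ⟨y, hy⟩
    have hsum1 : (∑ i ∈ Finset.range (k + 1), z (i + 1)) = 0 := by
      rw [hz0, add_zero] at hsplit; exact hsplit
    choose w hwL hwz using fun i => Submodule.mem_map.mp (hrange i)
    have hwsum : (∑ i ∈ Finset.range (k + 1), w i) = 0 := by
      apply hphi
      rw [map_sum, map_zero]
      simpa [hwz] using hsum1
    have hw0 : ∀ i ≤ k, w i = 0 := ih w hwL hwsum
    intro i hi
    rcases Nat.eq_zero_or_eq_succ_pred i with h0 | h1
    · rw [h0]; exact hz0
    · rw [h1, ← hwz, hw0 _ (by omega), map_zero]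

/-- Let `R`, `S` be rings, `S` semiprime right Goldie, and let `M` be an
`(R,S)`-bimodule with finite uniform rank as a left `R`-module which is torsionfree as a
right `S`-module.  Let `N` be a left `R`-module and `f : M → N` an `R`-homomorphism whose
kernel is not essential in `M`.  Then `Hom_R(M,N)` is not torsion as a left `S`-module:
there is no regular element `c` of `S` with `c · f = 0` (where `(c · f)(m) = f(m c)`). -/
theorem hom_not_torsion (R S : Type) [Ring R] [Ring S]
    (hSsp : IsSemiprimeRing S) (hSG : IsRightGoldie S)
    (M : Type) [AddCommGroup M] [Module R M] [Module Sᵐᵒᵖ M] [SMulCommClass R Sᵐᵒᵖ M]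
    (hrank : FiniteUniformRank R M) (htf : RightTorsionfree S M)
    (N : Type) [AddCommGroup N] [Module R N]
    (f : M →ₗ[R] N) (hker : ¬ IsEssentialSub R M (LinearMap.ker f)) :
    ¬ ∃ c : S, IsRegElem S c ∧ ∀ m : M, f (MulOpposite.op c • m) = 0 := by
  rintro ⟨c, hreg, hc⟩
  rw [IsEssentialSub] at hker
  push_neg at hker
  obtain ⟨L, hL, hLker⟩ := hker
  obtain ⟨n, hn⟩ := hrank
  set phi : Module.End R M :=
    { toFun := fun m => MulOpposite.op c • m
      map_add' := fun a b => smul_add _ a b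
      map_smul' := fun r a => (smul_comm r (MulOpposite.op c) a).symm } with hphi_def
  have hphi_apply : ∀ m : M, phi m = MulOpposite.op c • m := fun m => rfl
  have hphi : Function.Injective phi := by
    intro a b hab
    have h : MulOpposite.op c • (a - b) = 0 := by
      rw [smul_sub, ← hphi_apply, ← hphi_apply, hab, sub_self]
    have := htf (a - b) c hreg h
    exact sub_eq_zero.mp this
  have hrk : LinearMap.range phi ≤ LinearMap.ker f := by
    rintro x ⟨m, rfl⟩
    exact hc m
  have hdisj : ∀ x, x ∈ L → x ∈ LinearMap.range phi → x = 0 := by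
    intro x hxL hxr
    have : x ∈ LinearMap.ker f ⊓ L := ⟨hrk hxr, hxL⟩
    rw [hLker] at this
    exact this
  set g : Fin (n + 1) → Submodule R M := fun i => Submodule.map (phi ^ (i : ℕ)) L with hg
  have hgne : ∀ i, g i ≠ ⊥ := by
    intro i hbot
    obtain ⟨x, hxL, hx0⟩ := Submodule.exists_mem_ne_zero_of_ne_bot hL
    have hmem : (phi ^ (i : ℕ)) x ∈ g i := Submodule.mem_map_of_mem hxL
    rw [hbot, Submodule.mem_bot] at hmem
    have hinj : Function.Injective (phi ^ (i : ℕ)) := by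
      induction (i : ℕ) with
      | zero => simpa [Module.End.coe_one] using Function.injective_id
      | succ k ihk =>
        rw [pow_succ, Module.End.mul_eq_comp]
        exact ihk.comp hphi
    exact hx0 (hinj (by simpa using hmem))
  refine hn g hgne ?_
  intro i
  rw [Submodule.disjoint_def]
  intro x hxi hxsup
  have hbs : (⨆ j, ⨆ (_ : j ≠ i), g j) = ⨆ j ∈ Finset.univ.erase i, g j := by
    apply le_antisymm
    · exact iSup₂_le fun j hj => le_iSup₂ (f := fun j (_ : j ∈ Finset.univ.erase i) => g j) j
        (Finset.mem_erase.mpr ⟨hj, Finset.mem_univ j⟩)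
    · exact iSup₂_le fun j hj => le_iSup₂ (f := fun j (_ : j ≠ i) => g j) j
        (Finset.mem_erase.mp hj).1
  rw [hbs] at hxsup
  obtain ⟨mu, hmu⟩ := (Submodule.mem_iSup_finset_iff_exists_sum _ x).mp hxsup
  set zf : Fin (n + 1) → M := fun j => if j = i then -x else (mu j : M) with hzf
  have hzf_mem : ∀ j, zf j ∈ g j := by
    intro j
    by_cases hj : j = i
    · simp only [hzf, if_pos hj, hj]; exact neg_mem hxi
    · simp only [hzf, if_neg hj]; exact (mu j).2
  have hzf_sum : (∑ j, zf j) = 0 := by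
    rw [← Finset.sum_erase_add Finset.univ zf (Finset.mem_univ i)]
    have h1 : (∑ j ∈ Finset.univ.erase i, zf j) = ∑ j ∈ Finset.univ.erase i, (mu j : M) := by
      apply Finset.sum_congr rfl
      intro j hj
      simp only [hzf, if_neg (Finset.mem_erase.mp hj).1]
    rw [h1, hmu]
    simp [hzf]
  set z : ℕ → M := fun k => if h : k < n + 1 then zf ⟨k, h⟩ else 0 with hz
  have hz_mem : ∀ k, z k ∈ Submodule.map (phi ^ k) L := by
    intro k
    by_cases h : k < n + 1
    · simp only [hz, dif_pos h]
      exact hzf_mem ⟨k, h⟩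
    · simp only [hz, dif_neg h]
      exact Submodule.zero_mem _
  have hz_sum : (∑ k ∈ Finset.range (n + 1), z k) = 0 := by
    rw [Finset.sum_range fun k => z k]
    rw [← hzf_sum]
    apply Finset.sum_congr rfl
    intro j _
    simp only [hz]
    rw [dif_pos j.isLt]
  have := key_sum phi hphi L hdisj n z hz_mem hz_sum (i : ℕ) (by omega)
  simp only [hz, dif_pos i.isLt] at this
  have : zf i = 0 := by simpa using this
  rw [hzf] at this
  simp only [if_pos rfl] at this
  simpa using neg_eq_zero.mp this
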